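/- Let T : ℝ₊^N → ℝ₊₊^N be a positive concave mapping and let M be its lower bounding matrix. Then for all x, y ∈ ℝ₊^N with x ≥ y componentwise, one has T(x) ≥ T(y) + M·(x − y) componentwise. -/

import Mathlib

open Matrix Filter Topology

noncomputable section

/-- `g` is a supergradient of `f` at `x`: the supergradient inequality holds for all
points `y` in the nonnegative orthant. -/
def IsSupergrad {N : ℕ} (f : (Fin N → ℝ) → ℝ) (x g : Fin N → ℝ) : Prop :=
  ∀ y : Fin N → ℝ, 0 ≤ y → f y ≤ f x + ∑ i, g i * (y i - x i)

/-- `M` is the lower bounding matrix of the positive concave mapping with components `f i`: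
`M i k` is the infimum of the `k`-th components of all supergradients of `f i` at points of
the nonnegative orthant. -/
def IsLBM {N : ℕ} (f : Fin N → (Fin N → ℝ) → ℝ) (M : Matrix (Fin N) (Fin N) ℝ) : Prop :=
  ∀ i k, M i k =
    sInf {t : ℝ | ∃ x : Fin N → ℝ, 0 ≤ x ∧ ∃ g : Fin N → ℝ, IsSupergrad (f i) x g ∧ g k = t}

/-- The spectral radius of a real matrix: the supremum of the moduli of its complex
eigenvalues. -/
def specRad {N : ℕ} (M : Matrix (Fin N) (Fin N) ℝ) : ENNReal :=
  spectralRadius ℂ (M.map (algebraMap ℝ ℂ))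

lemma orth_convex {N : ℕ} : Convex ℝ {x : Fin N → ℝ | 0 ≤ x} := by
  intro a ha b hb s t hs ht hst k
  have h1 : 0 ≤ a k := ha k
  have h2 : 0 ≤ b k := hb k
  have : 0 ≤ s * a k + t * b k := add_nonneg (mul_nonneg hs h1) (mul_nonneg ht h2)
  simpa using this

lemma mem_interior_orth {N : ℕ} {x : Fin N → ℝ} (hx : ∀ k, 0 < x k) :
    x ∈ interior {x : Fin N → ℝ | 0 ≤ x} := by
  have hopen : IsOpen {y : Fin N → ℝ | ∀ k, 0 < y k} := by
    have heq : {y : Fin N → ℝ | ∀ k, 0 < y k} = ⋂ k, (fun y : Fin N → ℝ => y k) ⁻¹' Set.Ioi 0 := by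
      ext; simp
    rw [heq]
    exact isOpen_iInter_of_finite fun k => (isOpen_Ioi.preimage (continuous_apply k))
  have hsub : {y : Fin N → ℝ | ∀ k, 0 < y k} ⊆ {x : Fin N → ℝ | 0 ≤ x} := by
    intro y hy
    show (0 : Fin N → ℝ) ≤ y
    intro k
    exact (hy k).le
  exact interior_maximal hsub hopen hx

lemma exists_supergrad {N : ℕ} {f : (Fin N → ℝ) → ℝ}
    (hconc : ConcaveOn ℝ {x : Fin N → ℝ | 0 ≤ x} f)
    {x : Fin N → ℝ} (hx : ∀ k, 0 < x k) :
    ∃ g, IsSupergrad f x g := by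
  set U := interior {x : Fin N → ℝ | 0 ≤ x} with hU
  have hxU : x ∈ U := mem_interior_orth hx
  have hUopen : IsOpen U := isOpen_interior
  have hcont : ContinuousOn f U := hconc.continuousOn_interior
  have hUconv : Convex ℝ U := orth_convex.interior
  have hconcU : ConcaveOn ℝ U f := hconc.subset interior_subset hUconv
  set A : Set ((Fin N → ℝ) × ℝ) := {p | p.1 ∈ U ∧ p.2 < f p.1} with hA
  have hAopen : IsOpen A := by
    rw [isOpen_iff_mem_nhds]
    rintro ⟨z, t⟩ ⟨hzU, htz⟩
    have hfc : ContinuousAt f z := hcont.continuousAt (hUopen.mem_nhds hzU)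
    set c := (t + f z) / 2 with hc
    have h1 : {w | w ∈ U ∧ c < f w} ∈ 𝓝 z := by
      refine Filter.inter_mem (hUopen.mem_nhds hzU) ?_
      exact hfc (Ioi_mem_nhds (by simp only [hc]; dsimp at htz ⊢; linarith))
    have h2 : Set.Iio c ∈ 𝓝 t := Iio_mem_nhds (by simp only [hc]; dsimp at htz ⊢; linarith)
    refine Filter.mem_of_superset (prod_mem_nhds h1 h2) ?_
    rintro ⟨w, s⟩ ⟨⟨hwU, hcw⟩, hsc⟩
    exact ⟨hwU, lt_trans hsc hcw⟩
  have hAconv : Convex ℝ A := by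
    rintro ⟨z, s⟩ ⟨hz, hzs⟩ ⟨w, t⟩ ⟨hw, hwt⟩ a b ha hb hab
    refine ⟨hUconv hz hw ha hb hab, ?_⟩
    have h := hconcU.2 hz hw ha hb hab
    simp only [smul_eq_mul] at h
    show a * s + b * t < f (a • z + b • w)
    rcases lt_or_eq_of_le ha with ha' | ha'
    · have h1 : a * s < a * f z := mul_lt_mul_of_pos_left hzs ha'
      have h2 : b * t ≤ b * f w := mul_le_mul_of_nonneg_left hwt.le hb
      linarith
    · have hb1 : b = 1 := by linarith
      have ha0 : a = 0 := ha'.symm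
      subst ha0; subst hb1
      simpa using lt_of_lt_of_le hwt (by simpa using h)
  have hp0 : ((x, f x) : (Fin N → ℝ) × ℝ) ∉ A := fun h => lt_irrefl _ h.2
  obtain ⟨L, hL⟩ := geometric_hahn_banach_open_point hAconv hAopen hp0
  set c := L (0, 1) with hcdef
  have hLdecomp : ∀ (z : Fin N → ℝ) (t : ℝ), L (z, t) = L (z, 0) + t * c := by
    intro z t
    have h : ((z, t) : (Fin N → ℝ) × ℝ) = (z, (0:ℝ)) + t • ((0 : Fin N → ℝ), (1:ℝ)) := by
      simp [Prod.ext_iff]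
    rw [h, map_add, L.map_smul, smul_eq_mul]
  have hcpos : 0 < c := by
    have h := hL (x, f x - 1) ⟨hxU, by dsimp; linarith⟩
    rw [hLdecomp x (f x - 1), hLdecomp x (f x)] at h
    nlinarith
  have hkey : ∀ z ∈ U, c * f z + L (z, 0) ≤ c * f x + L (x, 0) := by
    intro z hz
    have hδ : ∀ δ : ℝ, 0 < δ → c * f z + L (z, 0) - c * δ ≤ c * f x + L (x, 0) := by
      intro δ hδ0
      have h := hL (z, f z - δ) ⟨hz, by dsimp; linarith⟩
      rw [hLdecomp z (f z - δ), hLdecomp x (f x)] at h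
      nlinarith
    by_contra hcon
    push_neg at hcon
    have hab : 0 < (c * f z + L (z, 0)) - (c * f x + L (x, 0)) := by linarith
    have h2 := hδ (((c * f z + L (z, 0)) - (c * f x + L (x, 0))) / (2 * c)) (by positivity)
    have hcc : c * ((((c * f z + L (z, 0)) - (c * f x + L (x, 0)))) / (2 * c))
        = (((c * f z + L (z, 0)) - (c * f x + L (x, 0)))) / 2 := by
      field_simp
    rw [hcc] at h2
    linarith
  set ℓ : (Fin N → ℝ) →ₗ[ℝ] ℝ := L.toLinearMap.comp (LinearMap.inl ℝ (Fin N → ℝ) ℝ) with hℓ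
  have hℓapp : ∀ z : Fin N → ℝ, ℓ z = L (z, 0) := fun z => rfl
  set g : Fin N → ℝ := fun k => -(ℓ (fun j => if k = j then 1 else 0)) / c with hg
  have hsum0 : ∀ z : Fin N → ℝ, ∑ k, g k * z k = - ℓ z / c := by
    intro z
    have hterm : ∀ k, g k * z k = -(z k • ℓ (fun j => if k = j then 1 else 0)) / c := by
      intro k
      simp only [hg, smul_eq_mul]
      ring
    calc ∑ k, g k * z k = ∑ k, -(z k • ℓ (fun j => if k = j then 1 else 0)) / c :=
          Finset.sum_congr rfl fun k _ => hterm k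
      _ = - ℓ z / c := by
          rw [← Finset.sum_div, Finset.sum_neg_distrib, LinearMap.pi_apply_eq_sum_univ ℓ z]
  have hgrad : ∀ z ∈ U, f z ≤ f x + ∑ k, g k * (z k - x k) := by
    intro z hz
    have h2 : c * f z + ℓ z ≤ c * f x + ℓ x := by
      rw [hℓapp, hℓapp]; exact hkey z hz
    have hs : ∑ k, g k * (z k - x k) = (ℓ x - ℓ z) / c := by
      have h1 : ∀ k, g k * (z k - x k) = g k * z k - g k * x k := fun k => by ring
      rw [Finset.sum_congr rfl fun k _ => h1 k, Finset.sum_sub_distrib, hsum0 z, hsum0 x]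
      field_simp
      ring
    rw [hs]
    have h4 : f z - f x ≤ (ℓ x - ℓ z) / c := by
      rw [le_div_iff₀ hcpos]
      nlinarith
    linarith
  refine ⟨g, ?_⟩
  intro y hy
  have hz : (1/2 : ℝ) • x + (1/2 : ℝ) • y ∈ U :=
    orth_convex.combo_interior_self_mem_interior hxU hy (by norm_num) (by norm_num) (by norm_num)
  have h1 := hgrad _ hz
  have h2 := hconc.2 (interior_subset hxU) hy (le_of_lt one_half_pos) (le_of_lt one_half_pos)
    (by norm_num)
  have h3 : ∑ k, g k * (((1/2:ℝ) • x + (1/2:ℝ) • y) k - x k)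
      = (1/2) * ∑ k, g k * (y k - x k) := by
    rw [Finset.mul_sum]
    refine Finset.sum_congr rfl fun k _ => ?_
    simp only [Pi.add_apply, Pi.smul_apply, smul_eq_mul]
    ring
  rw [h3] at h1
  simp only [smul_eq_mul] at h2
  linarith

lemma supergrad_nonneg {N : ℕ} {f : (Fin N → ℝ) → ℝ}
    (hpos : ∀ x : Fin N → ℝ, 0 ≤ x → 0 < f x)
    {x g : Fin N → ℝ} (hx : 0 ≤ x) (hg : IsSupergrad f x g) (k : Fin N) : 0 ≤ g k := by
  by_contra hneg
  push_neg at hneg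
  have hfx : 0 < f x := hpos x hx
  set s : ℝ := (f x + 1) / (-(g k)) with hs
  have hspos : 0 < s := div_pos (by linarith) (neg_pos.2 hneg)
  set y : Fin N → ℝ := x + s • (Pi.single k 1 : Fin N → ℝ) with hy
  have hy0 : 0 ≤ y := by
    intro j
    have hxj : 0 ≤ x j := hx j
    have hsingle : 0 ≤ s * ((Pi.single k 1 : Fin N → ℝ) j) := by
      rcases eq_or_ne j k with h | h
      · subst h
        simp only [Pi.single_eq_same, mul_one]
        exact hspos.le
      · simp [Pi.single_eq_of_ne h]
    show (0:ℝ) ≤ y j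
    have hyj : y j = x j + s * ((Pi.single k 1 : Fin N → ℝ) j) := rfl
    rw [hyj]
    linarith
  have h := hg y hy0
  have hsum : ∑ j, g j * (y j - x j) = g k * s := by
    have hterm : ∀ j, g j * (y j - x j) = if j = k then g k * s else 0 := by
      intro j
      simp only [hy, Pi.add_apply, Pi.smul_apply, Pi.single_apply, smul_eq_mul]
      rcases eq_or_ne j k with h | h <;> simp [h]
    rw [Finset.sum_congr rfl fun j _ => hterm j, Finset.sum_ite_eq' Finset.univ k]
    simp
  have hgs : g k * s = -(f x + 1) := by
    rw [hs]
    have hgk : g k ≠ 0 := ne_of_lt hneg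
    field_simp
  rw [hsum, hgs] at h
  have := hpos y hy0
  linarith

/-- A positive concave mapping is bounded below by the affine mapping built from its
lower bounding matrix: x ≥ y implies T(x) ≥ T(y) + M(x − y). -/
theorem lower_bounding_matrix_affine_minorant {N : ℕ} (f : Fin N → (Fin N → ℝ) → ℝ)
    (hconc : ∀ i, ConcaveOn ℝ {x : Fin N → ℝ | 0 ≤ x} (f i))
    (husc : ∀ i, UpperSemicontinuousOn (f i) {x : Fin N → ℝ | 0 ≤ x})
    (hpos : ∀ i, ∀ x : Fin N → ℝ, 0 ≤ x → 0 < f i x)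
    (M : Matrix (Fin N) (Fin N) ℝ) (hM : IsLBM f M) :
    ∀ x y : Fin N → ℝ, 0 ≤ y → 0 ≤ x → y ≤ x →
      ∀ i, f i y + (M *ᵥ (x - y)) i ≤ f i x := by
  intro x y hy hx hyx i
  have hMv : (M *ᵥ (x - y)) i = ∑ k, M i k * (x k - y k) := by
    simp [Matrix.mulVec, dotProduct]
  rw [hMv]
  have key : ∀ ε : ℝ, 0 < ε →
      f i y + ∑ k, M i k * (x k - y k) ≤ f i (fun k => x k + ε) := by
    intro ε hε
    set x' : Fin N → ℝ := fun k => x k + ε with hx'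
    have hx'pos : ∀ k, 0 < x' k := fun k => by
      have hxk : (0:ℝ) ≤ x k := hx k; simp only [hx']; linarith
    obtain ⟨g, hg⟩ := exists_supergrad (hconc i) hx'pos
    have hx'0 : 0 ≤ x' := fun k => (hx'pos k).le
    have hgn : ∀ k, 0 ≤ g k := fun k => supergrad_nonneg (hpos i) hx'0 hg k
    have hMle : ∀ k, M i k ≤ g k := by
      intro k
      rw [hM i k]
      refine csInf_le ?_ ⟨x', hx'0, g, hg, rfl⟩
      refine ⟨0, ?_⟩
      rintro t ⟨x0, hx0, g0, hg0, rfl⟩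
      exact supergrad_nonneg (hpos i) hx0 hg0 k
    have h1 := hg y hy
    have h2 : ∑ k, M i k * (x k - y k) ≤ ∑ k, g k * (x' k - y k) := by
      refine Finset.sum_le_sum fun k _ => ?_
      have hk1 : x k - y k ≤ x' k - y k := by simp only [hx']; linarith
      have hk2 : y k ≤ x k := hyx k
      calc M i k * (x k - y k) ≤ g k * (x k - y k) :=
            mul_le_mul_of_nonneg_right (hMle k) (by linarith)
        _ ≤ g k * (x' k - y k) := mul_le_mul_of_nonneg_left hk1 (hgn k)
    have h3 : ∑ k, g k * (y k - x' k) = -∑ k, g k * (x' k - y k) := by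
      rw [← Finset.sum_neg_distrib]
      exact Finset.sum_congr rfl fun k _ => by ring
    rw [h3] at h1
    linarith
  by_contra hcon
  push_neg at hcon
  set c := (f i x + (f i y + ∑ k, M i k * (x k - y k))) / 2 with hc
  have hc1 : f i x < c := by simp only [hc]; linarith
  have hc2 : c < f i y + ∑ k, M i k * (x k - y k) := by simp only [hc]; linarith
  have husc' := husc i x hx c hc1
  have htend : Tendsto (fun ε : ℝ => (fun k => x k + ε : Fin N → ℝ)) (𝓝[>] (0:ℝ))
      (𝓝[{x : Fin N → ℝ | 0 ≤ x}] x) := by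
    apply tendsto_nhdsWithin_of_tendsto_nhds_of_eventually_within
    · have h0 : Tendsto (fun ε : ℝ => (fun k => x k + ε : Fin N → ℝ)) (𝓝 0) (𝓝 x) := by
        rw [tendsto_pi_nhds]
        intro k
        have : Tendsto (fun ε : ℝ => x k + ε) (𝓝 0) (𝓝 (x k + 0)) :=
          tendsto_const_nhds.add tendsto_id
        simpa using this
      exact h0.mono_left nhdsWithin_le_nhds
    · filter_upwards [self_mem_nhdsWithin] with ε hε
      have hε' : 0 < ε := hε
      intro k
      have hxk : (0:ℝ) ≤ x k := hx k
      show (0:ℝ) ≤ x k + ε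
      linarith
  obtain ⟨ε, hfε, hε⟩ := ((htend.eventually husc').and eventually_mem_nhdsWithin).exists
  have hkey := key ε hε
  linarith
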